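/- For x > 0 and ν > 0, ∫₀^x J_ν(t)²/t dt = (1/(2ν)) ∑_{n=0}^∞ ε_n J_{ν+n}(x)², where ε₀ = 1 and ε_n = 2 for n ≥ 1, and the series on the right converges. -/

import Mathlib

open MeasureTheory Real Filter Set Topology

noncomputable def besselJ (ν x : ℝ) : ℝ :=
  (x / 2) ^ ν * ∑' k : ℕ, (-1 : ℝ) ^ k * (x ^ 2 / 4) ^ k / (k.factorial * Real.Gamma (ν + k + 1))

noncomputable def besselY (ν x : ℝ) : ℝ :=
  limUnder (𝓝[{μ : ℝ | ∀ n : ℤ, μ ≠ (n : ℝ)}] ν)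
    (fun μ => (besselJ μ x * Real.cos (μ * Real.pi) - besselJ (-μ) x) / Real.sin (μ * Real.pi))

/-- coefficient -/
noncomputable def bc (μ : ℝ) (k : ℕ) : ℝ := (-1 : ℝ) ^ k / (k.factorial * Real.Gamma (μ + k + 1))

lemma gamma_fact_le {μ : ℝ} (hμ : 0 ≤ μ) (k : ℕ) :
    Real.Gamma (μ + 1) * k.factorial ≤ Real.Gamma (μ + k + 1) := by
  induction k with
  | zero => simp
  | succ n ih =>
      have hpos : (0:ℝ) < μ + n + 1 := by positivity
      have h1 : Real.Gamma ((μ + n + 1) + 1) = (μ + n + 1) * Real.Gamma (μ + n + 1) :=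
        Real.Gamma_add_one hpos.ne'
      have hf : (((n+1).factorial : ℕ) : ℝ) = ((n:ℝ)+1) * n.factorial := by
        rw [Nat.factorial_succ]; push_cast; ring
      have hcast : μ + ((n+1:ℕ):ℝ) + 1 = (μ + n + 1) + 1 := by push_cast; ring
      rw [hcast, h1, hf]
      have h2 : ((n:ℝ) + 1) ≤ μ + n + 1 := by linarith
      have h3 : (0:ℝ) ≤ Real.Gamma (μ + 1) * n.factorial :=
        mul_nonneg (Real.Gamma_pos_of_pos (by linarith)).le (by positivity)
      calc Real.Gamma (μ + 1) * (((n:ℝ)+1) * n.factorial)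
          = ((n:ℝ)+1) * (Real.Gamma (μ + 1) * n.factorial) := by ring
        _ ≤ (μ + n + 1) * Real.Gamma (μ + n + 1) := mul_le_mul h2 ih h3 (by linarith)

lemma gamma_le_gamma_add {μ : ℝ} (hμ : 0 ≤ μ) (k : ℕ) :
    Real.Gamma (μ + 1) ≤ Real.Gamma (μ + k + 1) := by
  have := gamma_fact_le hμ k
  have h1 : (1:ℝ) ≤ k.factorial := by exact_mod_cast Nat.one_le_iff_ne_zero.mpr k.factorial_ne_zero
  nlinarith [(Real.Gamma_pos_of_pos (show (0:ℝ) < μ + 1 by linarith)).le]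

lemma bc_abs_le {μ : ℝ} (hμ : 0 ≤ μ) (k : ℕ) :
    |bc μ k| ≤ 1 / (k.factorial * Real.Gamma (μ + 1)) := by
  have hg : (0:ℝ) < Real.Gamma (μ + k + 1) := Real.Gamma_pos_of_pos (by positivity)
  have hg1 : (0:ℝ) < Real.Gamma (μ + 1) := Real.Gamma_pos_of_pos (by linarith)
  have hf : (0:ℝ) < k.factorial := by positivity
  rw [bc, abs_div, abs_pow, abs_neg, abs_one, one_pow]
  rw [abs_of_pos (by positivity)]
  rw [div_le_div_iff₀ (by positivity) (by positivity)]
  have := gamma_le_gamma_add hμ k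
  nlinarith

lemma summable_aux {μ : ℝ} (hμ : 0 ≤ μ) (u : ℝ) :
    Summable (fun k : ℕ => bc μ k * u ^ k) := by
  have hs : Summable (fun k : ℕ => (1 / Real.Gamma (μ+1)) * (|u| ^ k / (k.factorial : ℝ))) :=
    (Real.summable_pow_div_factorial |u|).mul_left _
  apply Summable.of_norm_bounded hs
  intro k
  rw [norm_mul, norm_pow, Real.norm_eq_abs, Real.norm_eq_abs]
  calc |bc μ k| * |u| ^ k ≤ (1 / (k.factorial * Real.Gamma (μ + 1))) * |u| ^ k := by
          apply mul_le_mul_of_nonneg_right (bc_abs_le hμ k) (by positivity)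
      _ = (1 / Real.Gamma (μ+1)) * (|u| ^ k / k.factorial) := by ring

lemma tsum_abs_le {μ : ℝ} (hμ : 0 ≤ μ) (u r : ℝ) (hur : |u| ≤ r) :
    |∑' k : ℕ, bc μ k * u ^ k| ≤ (∑' k : ℕ, r ^ k / k.factorial) / Real.Gamma (μ + 1) := by
  have hg1 : (0:ℝ) < Real.Gamma (μ + 1) := Real.Gamma_pos_of_pos (by linarith)
  have hr : 0 ≤ r := le_trans (abs_nonneg u) hur
  calc |∑' k : ℕ, bc μ k * u ^ k| ≤ ∑' k : ℕ, |bc μ k| * |u| ^ k := by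
        have h := norm_tsum_le_tsum_norm (f := fun k : ℕ => bc μ k * u ^ k)
          ((summable_aux hμ u).norm)
        simpa [Real.norm_eq_abs] using h
    _ ≤ ∑' k : ℕ, (r ^ k / k.factorial) / Real.Gamma (μ+1) := by
        apply Summable.tsum_le_tsum _ (by simpa [abs_mul, abs_pow] using (summable_aux hμ u).abs) _
        · intro k
          calc |bc μ k| * |u| ^ k ≤ (1 / (k.factorial * Real.Gamma (μ + 1))) * r ^ k := by
                apply mul_le_mul (bc_abs_le hμ k) (pow_le_pow_left₀ (abs_nonneg u) hur k)
                  (by positivity) (by positivity)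
            _ = (r ^ k / k.factorial) / Real.Gamma (μ+1) := by ring
        · exact ((Real.summable_pow_div_factorial r).div_const _)
    _ = (∑' k : ℕ, r ^ k / k.factorial) / Real.Gamma (μ + 1) := by
        rw [tsum_div_const]

lemma besselJ_eq_tsum (μ : ℝ) (x : ℝ) :
    besselJ μ x = ∑' k : ℕ, bc μ k * ((x/2) ^ μ * (x^2/4) ^ k) := by
  rw [besselJ, ← tsum_mul_left]
  congr 1; ext k; rw [bc]; ring

-- term derivative
lemma term_hasDerivAt {μ : ℝ} (k : ℕ) {z : ℝ} (hz : 0 < z) :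
    HasDerivAt (fun w : ℝ => bc μ k * ((w/2) ^ μ * (w^2/4) ^ k))
      (bc μ k * ((μ/2 + k) * (z/2) ^ (μ-1) * (z^2/4) ^ k)) z := by
  have hz2 : (0:ℝ) < z/2 := by linarith
  have h1 : HasDerivAt (fun w : ℝ => (w/2) ^ μ) (μ * (z/2) ^ (μ-1) * (1/2)) z := by
    have hbase : HasDerivAt (fun w : ℝ => w/2) (1/2) z := (hasDerivAt_id z).div_const 2
    exact (Real.hasDerivAt_rpow_const (Or.inl hz2.ne')).comp z hbase
  have h2 : HasDerivAt (fun w : ℝ => (w^2/4) ^ k)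
      ((k:ℝ) * (z^2/4) ^ (k-1) * (2*z/4)) z := by
    have hbase : HasDerivAt (fun w : ℝ => w^2/4) (2*z/4) z := by
      simpa using ((hasDerivAt_pow 2 z).div_const 4)
    exact hbase.pow k
  have h3 := (h1.mul h2).const_mul (bc μ k)
  refine h3.congr_deriv (Eq.symm ?_)
  have hμsplit : (z/2) ^ μ = (z/2) ^ (μ-1) * (z/2) := by
    rw [← Real.rpow_add_one (ne_of_gt hz2) (μ-1), sub_add_cancel]
  rw [hμsplit]
  rcases Nat.eq_zero_or_pos k with hk | hk
  · subst hk; push_cast; ring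
  · have hpow : (z^2/4) ^ (k-1) * (z^2/4) = (z^2/4) ^ k := by
      rw [← pow_succ, Nat.sub_add_cancel hk]
    have e : (z ^ 2 / 4) ^ (k-1) * (2*z/4) * (z/2) = (z^2/4) ^ k := by
      rw [← hpow]; ring
    linear_combination (-(bc μ k) * (k:ℝ) * ((z/2) ^ (μ-1))) * e

-- summability of derivative bound
lemma summable_deriv_bound {μ : ℝ} (hμ : 0 ≤ μ) (M r : ℝ) :
    Summable (fun k : ℕ => (1 / (k.factorial * Real.Gamma (μ + 1))) * ((μ/2 + k) * M * r ^ k)) := by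
  have hΓ : (0:ℝ) < Real.Gamma (μ + 1) := Real.Gamma_pos_of_pos (by linarith)
  apply Summable.of_norm_bounded
    (g := fun k : ℕ => ((μ/2 + 1) * |M| / Real.Gamma (μ + 1)) * ((2*|r|) ^ k / k.factorial))
  · exact (Real.summable_pow_div_factorial (2*|r|)).mul_left _
  · intro k
    rw [Real.norm_eq_abs]
    have h1 : |(1 / ((k.factorial : ℝ) * Real.Gamma (μ + 1))) * ((μ/2 + k) * M * r ^ k)|
        ≤ (1 / ((k.factorial:ℝ) * Real.Gamma (μ + 1))) * ((μ/2 + k) * |M| * |r| ^ k) := by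
      rw [abs_mul, abs_mul, abs_mul, abs_pow,
        abs_of_pos (show (0:ℝ) < 1 / ((k.factorial:ℝ) * Real.Gamma (μ+1)) by positivity),
        abs_of_nonneg (show (0:ℝ) ≤ μ/2 + (k:ℝ) by positivity)]
    refine h1.trans ?_
    have h2 : (μ/2 + (k:ℝ)) ≤ (μ/2 + 1) * 2 ^ k := by
      have hk : (k:ℝ) ≤ 2 ^ k := by exact_mod_cast Nat.le_of_lt (Nat.lt_two_pow_self (n := k))
      have h2k : (1:ℝ) ≤ 2 ^ k := one_le_pow₀ one_le_two
      nlinarith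
    calc (1 / ((k.factorial:ℝ) * Real.Gamma (μ + 1))) * ((μ/2 + k) * |M| * |r| ^ k)
        ≤ (1 / ((k.factorial:ℝ) * Real.Gamma (μ + 1))) * (((μ/2 + 1) * 2 ^ k) * |M| * |r| ^ k) := by
          apply mul_le_mul_of_nonneg_left _ (by positivity)
          apply mul_le_mul_of_nonneg_right _ (by positivity)
          apply mul_le_mul_of_nonneg_right h2 (abs_nonneg M)
      _ = ((μ/2 + 1) * |M| / Real.Gamma (μ + 1)) * ((2*|r|) ^ k / k.factorial) := by
          rw [mul_pow]; field_simp

lemma tsum_bessel_hasDerivAt {μ a b : ℝ} (hμ : 0 < μ) (ha0 : 0 < a) {y : ℝ}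
    (hy : y ∈ Ioo a b) :
    HasDerivAt (fun w => ∑' k : ℕ, bc μ k * ((w/2) ^ μ * (w^2/4) ^ k))
      (∑' k : ℕ, bc μ k * ((μ/2 + k) * (y/2) ^ (μ-1) * (y^2/4) ^ k)) y := by
  have hab : a < b := lt_trans hy.1 hy.2
  have hb0 : 0 < b := lt_trans ha0 hab
  refine hasDerivAt_tsum_of_isPreconnected
    (u := fun k : ℕ => (1 / (k.factorial * Real.Gamma (μ + 1))) *
      ((μ/2 + k) * ((a/2) ^ (μ-1) + (b/2) ^ (μ-1)) * (b^2/4) ^ k))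
    (summable_deriv_bound hμ.le _ _) isOpen_Ioo (convex_Ioo a b).isPreconnected
    (fun k z hz => term_hasDerivAt k (lt_trans ha0 hz.1)) ?_ hy ?_ hy
  · intro k z hz
    have hz0 : 0 < z := lt_trans ha0 hz.1
    rw [Real.norm_eq_abs, abs_mul]
    have h1 : |bc μ k| ≤ 1 / (k.factorial * Real.Gamma (μ + 1)) := bc_abs_le hμ.le k
    have h2 : |(μ/2 + k) * (z/2) ^ (μ-1) * (z^2/4) ^ k|
        ≤ (μ/2 + k) * ((a/2) ^ (μ-1) + (b/2) ^ (μ-1)) * (b^2/4) ^ k := by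
      rw [abs_mul, abs_mul]
      have hzM : |(z/2) ^ (μ-1)| ≤ (a/2) ^ (μ-1) + (b/2) ^ (μ-1) := by
        rw [abs_of_pos (Real.rpow_pos_of_pos (by linarith) _)]
        rcases le_or_gt 0 (μ - 1) with hcase | hcase
        · have h : (z/2) ^ (μ-1) ≤ (b/2) ^ (μ-1) :=
            Real.rpow_le_rpow (by linarith) (by linarith [hz.2]) hcase
          have hpos : (0:ℝ) < (a/2) ^ (μ-1) := Real.rpow_pos_of_pos (by linarith) _
          linarith
        · have h : (z/2) ^ (μ-1) ≤ (a/2) ^ (μ-1) :=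
            Real.rpow_le_rpow_of_nonpos (by linarith) (by linarith [hz.1]) hcase.le
          have hpos : (0:ℝ) < (b/2) ^ (μ-1) := Real.rpow_pos_of_pos (by linarith) _
          linarith
      have hzr : |(z^2/4) ^ k| ≤ (b^2/4) ^ k := by
        rw [abs_pow]
        apply pow_le_pow_left₀ (abs_nonneg _)
        rw [abs_of_pos (by positivity)]
        nlinarith [hz.2, hz0]
      rw [abs_of_pos (show (0:ℝ) < μ/2 + k by positivity)]
      exact mul_le_mul (mul_le_mul le_rfl hzM (abs_nonneg _) (by positivity)) hzr
        (abs_nonneg _) (by positivity)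
    exact mul_le_mul h1 h2 (abs_nonneg _) (by positivity)
  · have h := (summable_aux hμ.le (y^2/4)).mul_left ((y/2) ^ μ)
    apply h.congr
    intro k; ring

lemma besselJ_hasDerivAt {μ : ℝ} (hμ : 0 < μ) {y : ℝ} (hy : 0 < y) :
    HasDerivAt (besselJ μ)
      (∑' k : ℕ, bc μ k * ((μ/2 + k) * (y/2) ^ (μ-1) * (y^2/4) ^ k)) y := by
  have key := tsum_bessel_hasDerivAt (a := y/2) (b := y+1) hμ (by linarith)
    (show y ∈ Ioo (y/2) (y+1) by constructor <;> linarith)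
  have heq : besselJ μ =ᶠ[𝓝 y] (fun w => ∑' k : ℕ, bc μ k * ((w/2) ^ μ * (w^2/4) ^ k)) :=
    Eventually.of_forall (besselJ_eq_tsum μ)
  exact key.congr_of_eventuallyEq heq

-- coefficient identities
lemma coeff_C1 (μ : ℝ) (k : ℕ) : ((k:ℝ)+1) * bc μ (k+1) = -bc (μ+1) k := by
  rw [bc, bc]
  have h1 : μ + ((k:ℕ)+1:ℕ) + 1 = (μ+1) + k + 1 := by push_cast; ring
  rw [h1, Nat.factorial_succ]
  push_cast
  have h2 : ((k:ℝ)+1) ≠ 0 := by positivity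
  rcases eq_or_ne (Real.Gamma (μ + 1 + k + 1)) 0 with hg | hg
  · simp [hg]
  · field_simp
    ring
lemma coeff_C2 {μ : ℝ} (hμ : 0 < μ) (k : ℕ) : (μ+(k:ℝ)) * bc μ k = bc (μ-1) k := by
  rw [bc, bc]
  have h0 : (0:ℝ) < μ + k := by positivity
  have h1 : Real.Gamma (μ + k + 1) = (μ+k) * Real.Gamma (μ+k) := by
    rw [Real.Gamma_add_one h0.ne']
  have h2 : μ - 1 + (k:ℝ) + 1 = μ + k := by ring
  rw [h1, h2]
  have hg : Real.Gamma (μ+k) ≠ 0 := (Real.Gamma_pos_of_pos h0).ne'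
  have hf : ((k.factorial:ℝ)) ≠ 0 := by positivity
  field_simp

lemma summable_k_bc {μ : ℝ} (hμ : 0 < μ) (u : ℝ) :
    Summable (fun k : ℕ => (k:ℝ) * bc μ k * u ^ k) := by
  rw [← summable_nat_add_iff 1]
  have h : (fun k : ℕ => ((k:ℕ)+1:ℝ) * bc μ (k+1) * u ^ (k+1))
      = fun k : ℕ => -(bc (μ+1) k * u ^ k) * u := by
    ext k
    push_cast
    rw [coeff_C1 μ k, pow_succ]
    ring
  simp only [Nat.cast_add, Nat.cast_one]
  rw [show (fun k : ℕ => ((k:ℝ)+1) * bc μ (k+1) * u ^ (k+1)) = fun k : ℕ => -(bc (μ+1) k * u ^ k) * u from h]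
  exact (((summable_aux (by linarith : (0:ℝ) ≤ μ+1) u).neg).mul_right u)

-- (I1)
lemma tsum_k_bc {μ : ℝ} (hμ : 0 < μ) (u : ℝ) :
    ∑' k : ℕ, (k:ℝ) * bc μ k * u ^ k = -u * ∑' k : ℕ, bc (μ+1) k * u ^ k := by
  rw [Summable.tsum_eq_zero_add (summable_k_bc hμ u)]
  simp only [Nat.cast_zero, zero_mul, zero_add]
  have h : ∀ k : ℕ, ((k:ℕ)+1:ℝ) * bc μ (k+1) * u ^ (k+1) = (bc (μ+1) k * u ^ k) * (-u) := by
    intro k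
    push_cast
    linear_combination (u ^ (k+1)) * coeff_C1 μ k
  calc ∑' k : ℕ, (((k:ℕ)+1:ℕ):ℝ) * bc μ (k+1) * u ^ (k+1)
      = ∑' k : ℕ, (bc (μ+1) k * u ^ k) * (-u) :=
        tsum_congr fun k => by push_cast; linear_combination (u ^ (k+1)) * coeff_C1 μ k
    _ = -u * ∑' k : ℕ, bc (μ+1) k * u ^ k := by rw [tsum_mul_right]; ring

-- derivative sum in two forms
lemma deriv_sum_eq1 {μ : ℝ} (hμ : 0 < μ) {y : ℝ} (hy : 0 < y) :
    ∑' k : ℕ, bc μ k * ((μ/2 + k) * (y/2) ^ (μ-1) * (y^2/4) ^ k)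
      = (μ/y) * besselJ μ y - besselJ (μ+1) y := by
  have hy2 : (0:ℝ) < y/2 := by linarith
  set u := y^2/4 with hu
  have hsplit : (y/2) ^ μ = (y/2) ^ (μ-1) * (y/2) := by
    rw [← Real.rpow_add_one hy2.ne' (μ-1), sub_add_cancel]
  have hsplit2 : (y/2) ^ (μ+1) = (y/2) ^ (μ-1) * u := by
    rw [show μ + 1 = (μ-1) + 2 by ring, Real.rpow_add hy2, hu]
    have h2 : ((y/2):ℝ) ^ (2:ℝ) = y^2/4 := by
      rw [show (2:ℝ) = ((2:ℕ):ℝ) by norm_num, Real.rpow_natCast]; ring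
    rw [h2]
  have e1 : ∀ k : ℕ, bc μ k * ((μ/2 + k) * (y/2) ^ (μ-1) * u ^ k)
      = (y/2)^(μ-1) * ((μ/2) * (bc μ k * u ^ k) + ((k:ℝ) * bc μ k * u ^ k)) := by
    intro k; ring
  rw [tsum_congr e1, tsum_mul_left, Summable.tsum_add ((summable_aux hμ.le u).mul_left _)
    (summable_k_bc hμ u), tsum_mul_left, tsum_k_bc hμ u,
    besselJ_eq_tsum μ y, besselJ_eq_tsum (μ+1) y]
  rw [← hu]
  rw [tsum_congr (fun k => show bc μ k * ((y/2) ^ μ * u ^ k) = (y/2)^μ * (bc μ k * u ^ k) by ring),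
    tsum_mul_left,
    tsum_congr (fun k => show bc (μ+1) k * ((y/2) ^ (μ+1) * u ^ k) = (y/2)^(μ+1) * (bc (μ+1) k * u ^ k) by ring),
    tsum_mul_left, hsplit, hsplit2]
  field_simp
  ring

lemma deriv_sum_eq2 {μ : ℝ} (hμ : 0 < μ) {y : ℝ} (hy : 0 < y) :
    ∑' k : ℕ, bc μ k * ((μ/2 + k) * (y/2) ^ (μ-1) * (y^2/4) ^ k)
      = besselJ (μ-1) y - (μ/y) * besselJ μ y := by
  have hy2 : (0:ℝ) < y/2 := by linarith
  set u := y^2/4 with hu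
  have hsplit : (y/2) ^ μ = (y/2) ^ (μ-1) * (y/2) := by
    rw [← Real.rpow_add_one hy2.ne' (μ-1), sub_add_cancel]
  have e1 : ∀ k : ℕ, bc μ k * ((μ/2 + k) * (y/2) ^ (μ-1) * u ^ k)
      = (y/2)^(μ-1) * (((μ+(k:ℝ)) * bc μ k * u^k) - (μ/2) * (bc μ k * u ^ k)) := by
    intro k; ring
  have e2 : ∀ k : ℕ, (μ+(k:ℝ)) * bc μ k * u^k = bc (μ-1) k * u ^ k := by
    intro k; rw [coeff_C2 hμ k]
  have hsum2 : Summable (fun k : ℕ => (μ+(k:ℝ)) * bc μ k * u^k) := by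
    rw [show (fun k : ℕ => (μ+(k:ℝ)) * bc μ k * u^k) = fun k => bc (μ-1) k * u ^ k
      from funext e2]
    rw [← summable_nat_add_iff 1]
    have e3 : ∀ k : ℕ, bc (μ-1) (k+1) * u ^ (k+1) = -((((k:ℝ))+1)⁻¹ * (bc μ k * u^k) * u) := by
      intro k
      have := coeff_C1 (μ-1) k
      rw [sub_add_cancel] at this
      have hk : ((k:ℝ)+1) ≠ 0 := by positivity
      have h4 : bc (μ-1) (k+1) = -(((k:ℝ)+1)⁻¹ * bc μ k) := by
        field_simp
        linear_combination this
      rw [pow_succ, h4]; ring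
    rw [show (fun k : ℕ => bc (μ-1) (k+1) * u ^ (k+1))
      = fun k : ℕ => -((((k:ℝ))+1)⁻¹ * (bc μ k * u^k) * u) from funext e3]
    apply Summable.neg
    apply Summable.mul_right
    apply Summable.of_norm_bounded ((summable_aux hμ.le u).norm)
    intro k
    rw [norm_mul, norm_inv]
    have h1 : (1:ℝ) ≤ ‖((k:ℝ)+1)‖ := by
      rw [Real.norm_eq_abs, abs_of_pos (by positivity)]; linarith [Nat.cast_nonneg (α := ℝ) k]
    calc ‖((k:ℝ)+1)‖⁻¹ * ‖bc μ k * u^k‖ ≤ 1 * ‖bc μ k * u^k‖ := by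
          apply mul_le_mul_of_nonneg_right _ (norm_nonneg _)
          rw [inv_le_one_iff₀]; right; exact h1
      _ = ‖bc μ k * u^k‖ := one_mul _
  rw [tsum_congr e1, tsum_mul_left,
    Summable.tsum_sub hsum2 ((summable_aux hμ.le u).mul_left _),
    tsum_congr e2, tsum_mul_left,
    besselJ_eq_tsum (μ-1) y, besselJ_eq_tsum μ y, ← hu]
  rw [tsum_congr (fun k => show bc (μ-1) k * ((y/2) ^ (μ-1) * u ^ k) = (y/2)^(μ-1) * (bc (μ-1) k * u ^ k) by ring),
    tsum_mul_left,
    tsum_congr (fun k => show bc μ k * ((y/2) ^ μ * u ^ k) = (y/2)^μ * (bc μ k * u ^ k) by ring),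
    tsum_mul_left, hsplit]
  field_simp

lemma besselJ_eq_mul (μ : ℝ) : besselJ μ = fun y => (y/2) ^ μ * ∑' k : ℕ, bc μ k * (y^2/4) ^ k := by
  funext y
  rw [besselJ]
  congr 1
  exact tsum_congr fun k => by rw [bc]; ring

lemma besselJ_continuous {μ : ℝ} (hμ : 0 < μ) : Continuous (besselJ μ) := by
  rw [besselJ_eq_mul]
  apply Continuous.mul
  · have : (fun y : ℝ => (y/2) ^ μ) = (fun t : ℝ => t ^ μ) ∘ (fun y : ℝ => y/2) := rfl
    rw [this]
    apply Continuous.comp _ (continuous_id.div_const 2)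
    exact continuous_iff_continuousAt.mpr fun t => Real.continuousAt_rpow_const t μ (Or.inr hμ.le)
  · -- continuity of the series
    apply continuous_iff_continuousAt.mpr
    intro y
    have key : ∀ R : ℝ, 0 < R → ContinuousOn (fun w : ℝ => ∑' k : ℕ, bc μ k * (w^2/4) ^ k)
        (Ioo (-R) R) := by
      intro R hR
      apply continuousOn_tsum (u := fun k => |bc μ k| * (R^2/4) ^ k)
      · intro k
        apply Continuous.continuousOn
        fun_prop
      · have h := (summable_aux hμ.le (R^2/4)).abs
        apply h.congr
        intro k
        rw [abs_mul, abs_of_nonneg (by positivity : (0:ℝ) ≤ (R^2/4) ^ k)]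
      · intro k w hw
        rw [Real.norm_eq_abs, abs_mul, abs_pow]
        apply mul_le_mul_of_nonneg_left _ (abs_nonneg _)
        apply pow_le_pow_left₀ (abs_nonneg _)
        rw [abs_of_nonneg (by positivity : (0:ℝ) ≤ w^2/4)]
        have h1 : |w| < R := abs_lt.mpr ⟨hw.1, hw.2⟩
        nlinarith [abs_nonneg w, sq_abs w]
    have hy : y ∈ Ioo (-(|y|+1)) (|y|+1) := by
      constructor <;> cases abs_cases y <;> linarith
    exact (key (|y|+1) (by positivity)).continuousAt (Ioo_mem_nhds hy.1 hy.2)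

lemma besselJ_zero {μ : ℝ} (hμ : 0 < μ) : besselJ μ 0 = 0 := by
  rw [besselJ]
  norm_num [Real.zero_rpow hμ.ne']

lemma besselJ_bound' {μ : ℝ} (hμ : 0 < μ) {t x : ℝ} (ht : 0 ≤ t) (htx : t ≤ x) :
    |besselJ μ t| ≤ (t/2) ^ μ * ((∑' k : ℕ, (x^2/4) ^ k / k.factorial) / Real.Gamma (μ + 1)) := by
  rw [besselJ_eq_mul]
  simp only
  rw [abs_mul]
  have h1 : |(t/2) ^ μ| ≤ (t/2) ^ μ := le_of_eq (abs_of_nonneg (Real.rpow_nonneg (by linarith) _))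
  have h2 : |∑' k : ℕ, bc μ k * (t^2/4) ^ k|
      ≤ (∑' k : ℕ, (x^2/4) ^ k / k.factorial) / Real.Gamma (μ + 1) := by
    apply tsum_abs_le hμ.le
    rw [abs_of_nonneg (by positivity : (0:ℝ) ≤ t^2/4)]
    nlinarith
  exact mul_le_mul h1 h2 (abs_nonneg _) (Real.rpow_nonneg (by linarith) _)

-- combined derivative forms
lemma besselJ_hasDerivAt' {μ : ℝ} (hμ : 0 < μ) {y : ℝ} (hy : 0 < y) :
    HasDerivAt (besselJ μ) ((μ/y) * besselJ μ y - besselJ (μ+1) y) y := by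
  have h := besselJ_hasDerivAt hμ hy
  rwa [deriv_sum_eq1 hμ hy] at h

lemma besselJ_hasDerivAt'' {μ : ℝ} (hμ : 0 < μ) {y : ℝ} (hy : 0 < y) :
    HasDerivAt (besselJ μ) (besselJ (μ-1) y - (μ/y) * besselJ μ y) y := by
  have h := besselJ_hasDerivAt hμ hy
  rwa [deriv_sum_eq2 hμ hy] at h


noncomputable def eps (n : ℕ) : ℝ := if n = 0 then 1 else 2

lemma partial_hasDerivAt {ν : ℝ} (hν : 0 < ν) (N : ℕ) {t : ℝ} (ht : 0 < t) :
    HasDerivAt (fun s => ∑ n ∈ Finset.range (N+1), eps n * besselJ (ν + n) s ^ 2)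
      (2 * ν * besselJ ν t ^ 2 / t
        - 2 * besselJ (ν + N) t * besselJ (ν + N + 1) t) t := by
  induction N with
  | zero =>
      simp only [Finset.sum_range_one, Nat.cast_zero, add_zero, eps, if_pos rfl, one_mul]
      have h2 := (besselJ_hasDerivAt' hν ht).pow 2
      refine HasDerivAt.congr_of_eventuallyEq (h2.congr_deriv (Eq.symm ?_))
        (Eventually.of_forall fun s => by simp)
      field_simp
      ring
  | succ N ih =>
      have hμ : 0 < ν + ((N:ℝ)+1) := by positivity
      have hd := besselJ_hasDerivAt' hμ ht
      have hd2 := besselJ_hasDerivAt'' hμ ht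
      have huniq := hd.unique hd2
      have hcast : ν + ((N:ℝ)+1) - 1 = ν + N := by ring
      rw [hcast] at hd2 huniq
      have hD : HasDerivAt (besselJ (ν + ((N:ℝ)+1)))
          ((besselJ (ν + N) t - besselJ (ν + ((N:ℝ)+1) + 1) t)/2) t := by
        convert hd using 1
        linarith
      have hterm := (hD.pow 2).const_mul (eps (N+1))
      have hsum := ih.add hterm
      have hfun : (fun s => ∑ n ∈ Finset.range (N+1+1), eps n * besselJ (ν + n) s ^ 2)
          = (fun s => (∑ n ∈ Finset.range (N+1), eps n * besselJ (ν + n) s ^ 2)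
              + eps (N+1) * besselJ (ν + ((N:ℝ)+1)) s ^ 2) := by
        funext s
        rw [Finset.sum_range_succ]
        push_cast
        ring
      rw [hfun]
      refine hsum.congr_deriv (Eq.symm ?_)
      have heps : eps (N+1) = 2 := by rw [eps]; simp
      rw [heps]
      push_cast
      ring

section
variable {ν x : ℝ} (hν : 0 < ν) (hx : 0 < x)

-- integrability of the main integrand
lemma integrableOn_J2 (hν : 0 < ν) (hx : 0 < x) :
    IntegrableOn (fun t => besselJ ν t ^ 2 / t) (Ioc 0 x) volume := by
  set C : ℝ := (∑' k : ℕ, (x^2/4) ^ k / k.factorial) / Real.Gamma (ν + 1) with hC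
  have hmeas : AEStronglyMeasurable (fun t => besselJ ν t ^ 2 / t)
      (volume.restrict (Ioc 0 x)) := by
    apply ContinuousOn.aestronglyMeasurable _ measurableSet_Ioc
    apply ContinuousOn.div
    · exact ((besselJ_continuous hν).pow 2).continuousOn
    · exact continuousOn_id
    · intro t ht; exact ne_of_gt ht.1
  have hint : IntegrableOn (fun t : ℝ => (C^2/4^ν) * t ^ (2*ν - 1)) (Ioc 0 x) volume := by
    have h := intervalIntegral.intervalIntegrable_rpow' (a := 0) (b := x) (r := 2*ν-1) (by linarith)
    rw [intervalIntegrable_iff_integrableOn_Ioc_of_le hx.le] at h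
    exact h.const_mul _
  apply hint.mono' hmeas
  filter_upwards [ae_restrict_mem measurableSet_Ioc] with t ht
  have ht0 : 0 < t := ht.1
  have hJ := besselJ_bound' hν ht0.le ht.2
  rw [Real.norm_eq_abs, abs_div, abs_of_pos ht0, abs_pow, div_le_iff₀ ht0]
  have hpow : ((t/2) ^ ν) ^ 2 = t ^ (2*ν) / 4 ^ ν := by
    rw [Real.div_rpow ht0.le (by norm_num : (0:ℝ) ≤ 2), div_pow, ← Real.rpow_natCast (t ^ ν) 2,
      ← Real.rpow_natCast (2 ^ ν) 2, ← Real.rpow_mul ht0.le, ← Real.rpow_mul (by norm_num)]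
    norm_num
    rw [show (2:ℝ) ^ (ν * 2) = (2^2:ℝ) ^ ν by
      rw [← Real.rpow_natCast (2:ℝ) 2, ← Real.rpow_mul (by norm_num)]; ring_nf]
    norm_num
    ring_nf
  have hCpos : 0 ≤ C := by
    rw [hC]
    apply div_nonneg _ (Real.Gamma_pos_of_pos (by linarith)).le
    apply tsum_nonneg; intro k; positivity
  calc |besselJ ν t| ^ 2 ≤ ((t/2) ^ ν * C) ^ 2 := by
        apply pow_le_pow_left₀ (abs_nonneg _) hJ
    _ = (t ^ (2*ν) / 4 ^ ν) * C^2 := by rw [mul_pow, hpow]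
    _ = (C^2/4^ν) * t ^ (2*ν-1) * t := by
        rw [show (2*ν-1 : ℝ) = 2*ν - 1 from rfl, Real.rpow_sub ht0, Real.rpow_one]
        field_simp
    _ ≤ C^2/4^ν * t ^ (2*ν-1) * t := le_refl _

lemma integrableOn_tail (hν : 0 < ν) (hx : 0 < x) (N : ℕ) :
    IntegrableOn (fun t => besselJ (ν + N) t * besselJ (ν + N + 1) t) (Ioc 0 x) volume := by
  apply Continuous.integrableOn_Ioc
  exact (besselJ_continuous (by positivity)).mul (besselJ_continuous (by positivity))

end

section
variable {ν x : ℝ}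

lemma partial_eq_integral (hν : 0 < ν) (hx : 0 < x) (N : ℕ) :
    ∑ n ∈ Finset.range (N+1), eps n * besselJ (ν + n) x ^ 2
      = 2 * ν * (∫ t in Ioo (0:ℝ) x, besselJ ν t ^ 2 / t)
        - 2 * ∫ t in Ioo (0:ℝ) x, besselJ (ν + N) t * besselJ (ν + N + 1) t := by
  have hint1 : IntegrableOn (fun t => 2 * ν * besselJ ν t ^ 2 / t) (Ioc 0 x) volume := by
    have h := (integrableOn_J2 hν hx).const_mul (2*ν)
    apply h.congr
    filter_upwards [] with t
    show 2 * ν * (besselJ ν t ^ 2 / t) = 2 * ν * besselJ ν t ^ 2 / t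
    ring
  have hint2 : IntegrableOn (fun t => 2 * (besselJ (ν + N) t * besselJ (ν + N + 1) t))
      (Ioc 0 x) volume := (integrableOn_tail hν hx N).const_mul 2
  have hintG : IntegrableOn (fun t => 2 * ν * besselJ ν t ^ 2 / t
      - 2 * (besselJ (ν + N) t * besselJ (ν + N + 1) t)) (Ioc 0 x) volume := hint1.sub hint2
  have hcont : ContinuousOn (fun s => ∑ n ∈ Finset.range (N+1), eps n * besselJ (ν + n) s ^ 2)
      (Icc 0 x) := by
    apply Continuous.continuousOn
    apply continuous_finset_sum
    intro n _
    exact continuous_const.mul ((besselJ_continuous (by positivity)).pow 2)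
  have hFTC := intervalIntegral.integral_eq_sub_of_hasDerivAt_of_le hx.le hcont
      (fun t ht => by
        have h := partial_hasDerivAt hν N ht.1
        refine h.congr_deriv ?_
        ring)
      ((intervalIntegrable_iff_integrableOn_Ioc_of_le hx.le).mpr hintG)
  have hzero : (∑ n ∈ Finset.range (N+1), eps n * besselJ (ν + n) (0:ℝ) ^ 2) = 0 := by
    apply Finset.sum_eq_zero
    intro n _
    rw [besselJ_zero (by positivity : (0:ℝ) < ν + n)]
    ring
  rw [intervalIntegral.integral_of_le hx.le, integral_Ioc_eq_integral_Ioo] at hFTC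
  have hsplit : (∫ t in Ioo (0:ℝ) x, (2 * ν * besselJ ν t ^ 2 / t
        - 2 * (besselJ (ν + N) t * besselJ (ν + N + 1) t)))
      = 2 * ν * (∫ t in Ioo (0:ℝ) x, besselJ ν t ^ 2 / t)
        - 2 * ∫ t in Ioo (0:ℝ) x, besselJ (ν + N) t * besselJ (ν + N + 1) t := by
    rw [integral_sub (hint1.mono_set Ioo_subset_Ioc_self) (hint2.mono_set Ioo_subset_Ioc_self)]
    congr 1
    · rw [← integral_const_mul]
      apply integral_congr_ae
      filter_upwards [] with t
      ring
    · rw [← integral_const_mul]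
  rw [hsplit, hzero, sub_zero] at hFTC
  exact hFTC.symm

lemma tail_norm_le (hν : 0 < ν) (hx : 0 < x) (N : ℕ) :
    ‖∫ t in Ioo (0:ℝ) x, besselJ (ν + N) t * besselJ (ν + N + 1) t‖
      ≤ (x * ((x/2) ^ ν * (x/2) ^ (ν+1)
          * (∑' k : ℕ, (x^2/4) ^ k / k.factorial) ^ 2 / Real.Gamma (ν+1) ^ 2))
        * (x^2/4) ^ N / N.factorial := by
  set E : ℝ := ∑' k : ℕ, (x^2/4) ^ k / k.factorial with hE
  have hEpos : 0 ≤ E := tsum_nonneg fun k => by positivity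
  have hΓ1 : (0:ℝ) < Real.Gamma (ν+1) := Real.Gamma_pos_of_pos (by linarith)
  have hΓa : (0:ℝ) < Real.Gamma (ν + N + 1) := Real.Gamma_pos_of_pos (by positivity)
  have hΓb : (0:ℝ) < Real.Gamma (ν + N + 1 + 1) := Real.Gamma_pos_of_pos (by positivity)
  set C : ℝ := ((x/2) ^ (ν+(N:ℝ)) * (E / Real.Gamma (ν + N + 1)))
    * ((x/2) ^ (ν+(N:ℝ)+1) * (E / Real.Gamma (ν + N + 1 + 1))) with hC
  have hbound : ∀ t ∈ Ioo (0:ℝ) x, ‖besselJ (ν + N) t * besselJ (ν + N + 1) t‖ ≤ C := by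
    intro t ht
    rw [norm_mul, Real.norm_eq_abs, Real.norm_eq_abs, hC]
    have h1 : |besselJ (ν + N) t| ≤ (x/2) ^ (ν+(N:ℝ)) * (E / Real.Gamma (ν + N + 1)) := by
      refine (besselJ_bound' (by positivity) ht.1.le ht.2.le).trans ?_
      apply mul_le_mul_of_nonneg_right _ (by positivity)
      exact Real.rpow_le_rpow (by linarith [ht.1]) (by linarith [ht.2]) (by positivity)
    have h2 : |besselJ (ν + N + 1) t| ≤ (x/2) ^ (ν+(N:ℝ)+1) * (E / Real.Gamma (ν + N + 1 + 1)) := by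
      refine (besselJ_bound' (by positivity) ht.1.le ht.2.le).trans ?_
      apply mul_le_mul_of_nonneg_right _ (by positivity)
      exact Real.rpow_le_rpow (by linarith [ht.1]) (by linarith [ht.2]) (by positivity)
    exact mul_le_mul h1 h2 (abs_nonneg _) (by positivity)
  have hvol : volume (Ioo (0:ℝ) x) < ⊤ := by
    rw [Real.volume_Ioo]; exact ENNReal.ofReal_lt_top
  have hnorm := norm_setIntegral_le_of_norm_le_const hvol hbound
    (f := fun t => besselJ (ν + N) t * besselJ (ν + N + 1) t)
  rw [Real.volume_real_Ioo_of_le hx.le, sub_zero] at hnorm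
  refine hnorm.trans ?_
  -- now pure algebra: C * x ≤ K * (x²/4)^N / N!
  have hx2 : (0:ℝ) < x/2 := by linarith
  have hA1 : (x/2) ^ (ν+(N:ℝ)) = (x/2) ^ ν * ((x/2):ℝ) ^ (N:ℕ) := by
    rw [Real.rpow_add hx2, Real.rpow_natCast]
  have hA3 : (x/2) ^ (ν+(N:ℝ)+1) = (x/2) ^ (ν+1) * ((x/2):ℝ) ^ (N:ℕ) := by
    rw [show ν+(N:ℝ)+1 = (ν+1)+(N:ℝ) by ring, Real.rpow_add hx2, Real.rpow_natCast]
  have hG1 : Real.Gamma (ν+1) * N.factorial ≤ Real.Gamma (ν + N + 1) := gamma_fact_le hν.le N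
  have hG2 : Real.Gamma (ν+1) ≤ Real.Gamma (ν + N + 1 + 1) := by
    have h := gamma_fact_le hν.le (N+1)
    have h2 : (1:ℝ) ≤ (N+1).factorial := by exact_mod_cast Nat.one_le_iff_ne_zero.mpr (N+1).factorial_ne_zero
    have h3 : ν + ((N:ℕ)+1:ℕ) + 1 = ν + N + 1 + 1 := by push_cast; ring
    rw [h3] at h
    nlinarith [hΓ1]
  have hfacpos : (0:ℝ) < N.factorial := by positivity
  have hCx : C * x = (x * ((x/2) ^ ν * (x/2) ^ (ν+1) * E^2) * (x^2/4)^N)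
      / (Real.Gamma (ν + N + 1) * Real.Gamma (ν + N + 1 + 1)) := by
    have hww : ((x/2):ℝ)^(N:ℕ) * ((x/2):ℝ)^(N:ℕ) = (x^2/4)^N := by
      rw [← mul_pow]; congr 1; ring
    rw [hC, hA1, hA3, ← hww]
    field_simp
  calc C * x = (x * ((x/2) ^ ν * (x/2) ^ (ν+1) * E^2) * (x^2/4)^N)
      / (Real.Gamma (ν + N + 1) * Real.Gamma (ν + N + 1 + 1)) := hCx
    _ ≤ (x * ((x/2) ^ ν * (x/2) ^ (ν+1) * E^2) * (x^2/4)^N)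
      / (Real.Gamma (ν+1) ^ 2 * N.factorial) := by
        apply div_le_div_of_nonneg_left (by positivity) (by positivity)
        nlinarith [mul_le_mul hG1 hG2 hΓ1.le hΓa.le]
    _ = (x * ((x/2) ^ ν * (x/2) ^ (ν+1) * E ^ 2 / Real.Gamma (ν+1) ^ 2)) * (x^2/4) ^ N
      / N.factorial := by
        field_simp
end


theorem stmt6 (ν x : ℝ) (hν : 0 < ν) (hx : 0 < x) :
    HasSum (fun n : ℕ => (if n = 0 then (1:ℝ) else 2) * besselJ (ν + n) x ^ 2)
      (2 * ν * ∫ t in Set.Ioo (0:ℝ) x, besselJ ν t ^ 2 / t) := by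
  have hf : (fun n : ℕ => (if n = 0 then (1:ℝ) else 2) * besselJ (ν + n) x ^ 2)
      = fun n => eps n * besselJ (ν + n) x ^ 2 := rfl
  rw [hf, hasSum_iff_tendsto_nat_of_nonneg]
  · rw [← tendsto_add_atTop_iff_nat 1]
    have heq : ∀ N : ℕ, (∑ n ∈ Finset.range (N+1), eps n * besselJ (ν + n) x ^ 2)
        = 2 * ν * (∫ t in Ioo (0:ℝ) x, besselJ ν t ^ 2 / t)
          - 2 * ∫ t in Ioo (0:ℝ) x, besselJ (ν + N) t * besselJ (ν + N + 1) t :=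
      partial_eq_integral hν hx
    simp only [heq]
    have htail : Tendsto
        (fun N : ℕ => ∫ t in Ioo (0:ℝ) x, besselJ (ν + N) t * besselJ (ν + N + 1) t)
        atTop (𝓝 0) := by
      apply squeeze_zero_norm (tail_norm_le hν hx)
      have h := FloorSemiring.tendsto_pow_div_factorial_atTop (K := ℝ) (x^2/4)
      have h2 := h.const_mul (x * ((x/2) ^ ν * (x/2) ^ (ν+1)
          * (∑' k : ℕ, (x^2/4) ^ k / k.factorial) ^ 2 / Real.Gamma (ν+1) ^ 2))
      rw [mul_zero] at h2
      apply h2.congr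
      intro N
      ring
    have hfin := (tendsto_const_nhds
        (x := (2 * ν * ∫ (t : ℝ) in Ioo (0:ℝ) x, besselJ ν t ^ 2 / t))
        (f := atTop (α := ℕ))).sub (htail.const_mul 2)
    rw [mul_zero, sub_zero] at hfin
    exact hfin
  · intro n
    apply mul_nonneg _ (sq_nonneg _)
    rw [eps]
    split_ifs <;> norm_num
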